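/- For every real r ≥ 3 and every t with 0 < t < 1, we have (1+t)^{r−1}(1−t)/(1 − t^r) − 1 ≥ t/3. -/

import Mathlib

theorem stmt_13 (r t : ℝ) (hr : 3 ≤ r) (ht0 : 0 < t) (ht1 : t < 1) :
    (1 + t) ^ (r - 1) * (1 - t) / (1 - t ^ r) - 1 ≥ t / 3 := by
  have hb : (0:ℝ) < 1 + t := by linarith
  have hb1 : (1:ℝ) ≤ 1 + t := by linarith
  have hlogb : 0 < Real.log (1 + t) := Real.log_pos (by linarith)
  have hlogt : Real.log t < 0 := Real.log_neg ht0 ht1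
  set g : ℝ → ℝ := fun s => (1 - t) * (1 + t) ^ (s - 1) - (1 + t/3) * (1 - t ^ s) with hg
  -- derivative of g
  have hderiv : ∀ s : ℝ, HasDerivAt g
      ((1 - t) * ((1 + t) ^ (s - 1) * Real.log (1 + t)) + (1 + t/3) * (t ^ s * Real.log t)) s := by
    intro s
    have h1 : HasDerivAt (fun s : ℝ => (1 + t) ^ (s - 1))
        ((1 + t) ^ (s - 1) * Real.log (1 + t) * 1) s := by
      have hin : HasDerivAt (fun s : ℝ => s - 1) 1 s := (hasDerivAt_id s).sub_const 1
      exact (Real.hasStrictDerivAt_const_rpow hb (s - 1)).hasDerivAt.comp s hin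
    have h2 : HasDerivAt (fun s : ℝ => t ^ s) (t ^ s * Real.log t) s :=
      (Real.hasStrictDerivAt_const_rpow ht0 s).hasDerivAt
    have h3 := (h1.const_mul (1 - t)).sub (((hasDerivAt_const s (1:ℝ)).sub h2).const_mul (1 + t/3))
    exact h3.congr_deriv (by ring)
  -- derivative nonneg on r ≥ 3
  have hdnn : ∀ s : ℝ, 3 ≤ s →
      0 ≤ (1 - t) * ((1 + t) ^ (s - 1) * Real.log (1 + t)) + (1 + t/3) * (t ^ s * Real.log t) := by
    intro s hs
    have h1 : (1 + t) ^ (2:ℝ) ≤ (1 + t) ^ (s - 1) :=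
      Real.rpow_le_rpow_of_exponent_le hb1 (by linarith)
    have h1' : (1 + t) ^ (2:ℝ) = (1 + t)^2 := by
      rw [show (2:ℝ) = ((2:ℕ):ℝ) by norm_num, Real.rpow_natCast]
    have h2 : t ^ s ≤ t ^ (3:ℝ) :=
      Real.rpow_le_rpow_of_exponent_ge ht0 (le_of_lt ht1) hs
    have h2' : t ^ (3:ℝ) = t^3 := by
      rw [show (3:ℝ) = ((3:ℕ):ℝ) by norm_num, Real.rpow_natCast]
    -- log bounds
    have hlog1 : t / (1 + t) ≤ Real.log (1 + t) := by
      have := Real.add_one_le_exp (-(Real.log (1 + t)))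
      rw [Real.exp_neg, Real.exp_log hb] at this
      have h := mul_le_mul_of_nonneg_right this (le_of_lt hb)
      rw [inv_mul_cancel₀ (ne_of_gt hb)] at h
      rw [div_le_iff₀ hb]
      nlinarith [h]
    have hlog2 : -Real.log t ≤ (1 - t) / t := by
      have := Real.log_le_sub_one_of_pos (show (0:ℝ) < 1/t by positivity)
      rw [Real.log_div one_ne_zero (ne_of_gt ht0), Real.log_one] at this
      have : 0 - Real.log t ≤ 1 / t - 1 := this
      rw [div_sub' (ne_of_gt ht0)] at *
      linarith [(div_le_div_iff_of_pos_right ht0).mpr (show (1:ℝ) - t*1 ≤ 1 - t by ring_nf; linarith) ]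
    -- lower bound for positive part
    have hA : (1 - t) * t * (1 + t) ≤ (1 - t) * ((1 + t) ^ (s - 1) * Real.log (1 + t)) := by
      have e1 : (1 - t) * t * (1 + t) = (1 - t) * ((1 + t)^2 * (t / (1 + t))) := by
        field_simp
      rw [e1]
      apply mul_le_mul_of_nonneg_left _ (by linarith)
      have hlb : 0 ≤ t / (1 + t) := by positivity
      calc (1 + t)^2 * (t / (1 + t)) ≤ (1 + t) ^ (s - 1) * (t / (1 + t)) := by
            apply mul_le_mul_of_nonneg_right _ hlb
            rw [← h1']; exact h1
        _ ≤ (1 + t) ^ (s - 1) * Real.log (1 + t) := by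
            apply mul_le_mul_of_nonneg_left hlog1 (le_of_lt (Real.rpow_pos_of_pos hb _))
    -- upper bound for negative part
    have hB : (1 + t/3) * (t ^ s * (-Real.log t)) ≤ (1 + t/3) * t^2 * (1 - t) := by
      have hts : 0 < t ^ s := Real.rpow_pos_of_pos ht0 s
      have step1 : t ^ s * (-Real.log t) ≤ t ^ s * ((1 - t) / t) :=
        mul_le_mul_of_nonneg_left hlog2 (le_of_lt hts)
      have step2 : t ^ s * ((1 - t) / t) ≤ t^3 * ((1 - t) / t) := by
        apply mul_le_mul_of_nonneg_right _ (div_nonneg (by linarith) (le_of_lt ht0))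
        rw [← h2']; exact h2
      have e : t^3 * ((1 - t) / t) = t^2 * (1 - t) := by field_simp
      have : t ^ s * (-Real.log t) ≤ t^2 * (1 - t) := by
        calc t ^ s * (-Real.log t) ≤ t ^ s * ((1 - t) / t) := step1
          _ ≤ t^3 * ((1 - t) / t) := step2
          _ = t^2 * (1 - t) := e
      calc (1 + t/3) * (t ^ s * (-Real.log t)) ≤ (1 + t/3) * (t^2 * (1 - t)) :=
            mul_le_mul_of_nonneg_left this (by linarith)
        _ = (1 + t/3) * t^2 * (1 - t) := by ring
    have hcompare : (1 + t/3) * t^2 * (1 - t) ≤ (1 - t) * t * (1 + t) := by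
      nlinarith [mul_nonneg (mul_nonneg (le_of_lt ht0) (show (0:ℝ) ≤ 1 - t by linarith))
        (show (0:ℝ) ≤ 1 - t^2/3 by nlinarith)]
    nlinarith [hA, hB, hcompare]
  -- monotone on Ici 3
  have hmono : MonotoneOn g (Set.Ici 3) := by
    apply monotoneOn_of_hasDerivWithinAt_nonneg (f' := fun s =>
      (1 - t) * ((1 + t) ^ (s - 1) * Real.log (1 + t)) + (1 + t/3) * (t ^ s * Real.log t))
      (convex_Ici 3)
    · exact (continuous_iff_continuousAt.mpr fun s => (hderiv s).continuousAt).continuousOn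
    · intro x hx
      exact (hderiv x).hasDerivWithinAt
    · intro x hx
      rw [interior_Ici] at hx
      exact hdnn x (le_of_lt hx)
  have hg3 : 0 ≤ g 3 := by
    have e1 : (1 + t) ^ ((3:ℝ) - 1) = (1 + t)^2 := by
      rw [show (3:ℝ) - 1 = ((2:ℕ):ℝ) by norm_num, Real.rpow_natCast]
    have e2 : t ^ (3:ℝ) = t^3 := by
      rw [show (3:ℝ) = ((3:ℕ):ℝ) by norm_num, Real.rpow_natCast]
    simp only [hg, e1, e2]
    nlinarith [sq_nonneg (t - 1), mul_pos ht0 (mul_pos (mul_pos ht0 ht0) ht0)]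
  have hgr : 0 ≤ g r := le_trans hg3 (hmono (by norm_num) (by exact hr) hr)
  have htr : t ^ r < 1 := Real.rpow_lt_one (le_of_lt ht0) ht1 (by linarith)
  have hden : 0 < 1 - t ^ r := by linarith
  have hkey : (1 + t/3) * (1 - t ^ r) ≤ (1 + t) ^ (r - 1) * (1 - t) := by
    have := hgr
    simp only [hg] at this
    linarith
  have : 1 + t/3 ≤ (1 + t) ^ (r - 1) * (1 - t) / (1 - t ^ r) :=
    (le_div_iff₀ hden).mpr hkey
  linarith
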